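/- (Appendix D example: a Markov abstraction need not be a kinematic inseparability abstraction.) There exist a finite MDP M = (X, A, R, T, γ), an abstraction φ : X → Z, and an initial distribution P_0 such that φ is a Markov abstraction over the policy class Π_φ (i.e. B_{φ,t}^{π(k)}(x | z_t, history) = B_{φ,t}^π(x | z_t) for all π ∈ Π_φ, all t, all k ≥ 1, all histories, and all x ∈ X), yet φ is not a kinematic inseparability abstraction: there exist x₁, x₂ ∈ X with φ(x₁) = φ(x₂), an action a ∈ A, and x' ∈ X with T(x'|a,x₁) ≠ T(x'|a,x₂). A witness is X = {x₀, x₁, x₂, x₃}, A = {a₀, a₁}, where action a₁ from every state transitions to x₁ or x₂ with probability 1/2 each, action a₀ deterministically sends x₁ ↦ x₃, x₂ ↦ x₀, x₀ ↦ x₀, x₃ ↦ x₃, and φ(x₁) = φ(x₂) = z_B, φ(x₀) = z_A, φ(x₃) = z_C. -/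
import Mathlib


namespace MarkovAbstraction

noncomputable section

variable {X A Z : Type*} [Fintype X] [Fintype A] [Fintype Z] [DecidableEq Z]

/-- `T x' a x` is the probability of transitioning to `x'` given action `a` in state `x`;
`T (· | a, x)` must be a probability distribution for each `a, x`. -/
def IsKernel (T : X → A → X → ℝ) : Prop :=
  (∀ x' a x, 0 ≤ T x' a x) ∧ ∀ a x, ∑ x' : X, T x' a x = 1

/-- `π t a x` is the probability of choosing action `a` in state `x` at timestep `t`. -/
def IsPolicy (π : ℕ → A → X → ℝ) : Prop :=
  (∀ t a x, 0 ≤ π t a x) ∧ ∀ t x, ∑ a : A, π t a x = 1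

/-- A probability distribution over ground states. -/
def IsDist (P0 : X → ℝ) : Prop :=
  (∀ x, 0 ≤ P0 x) ∧ ∑ x : X, P0 x = 1

/-- Membership in the policy class `Π_φ`: the policy assigns equal action probabilities to
ground states with the same abstract state. -/
def InPolicyClass (φ : X → Z) (π : ℕ → A → X → ℝ) : Prop :=
  ∀ t a x₁ x₂, φ x₁ = φ x₂ → π t a x₁ = π t a x₂

/-- State visitation distribution `P_t^π(x)`. -/
def Pvis (T : X → A → X → ℝ) (π : ℕ → A → X → ℝ) (P0 : X → ℝ) : ℕ → X → ℝ
  | 0 => P0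
  | t + 1 => fun x => ∑ a : A, ∑ xp : X, T x a xp * π t a xp * Pvis T π P0 t xp

/-- Belief distribution `B_{φ,t}^π(x|z)`. -/
def Bel0 (T : X → A → X → ℝ) (π : ℕ → A → X → ℝ) (P0 : X → ℝ) (φ : X → Z)
    (t : ℕ) (z : Z) (x : X) : ℝ :=
  (if φ x = z then Pvis T π P0 t x else 0) /
    ∑ xt : X, if φ xt = z then Pvis T π P0 t xt else 0

/-- `k`-step belief distribution `B_{φ,t}^{π(k)}(x | z_t, {a_{t-i}, z_{t-i}}_{i=1}^k)`,
where the history `[(a_{t-1}, z_{t-1}), ..., (a_{t-k}, z_{t-k})]` is listed most recent first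
(so `k` is the length of the history list, and the empty history gives `B_{φ,t}^{π(0)} = B_{φ,t}^π`). -/
def BelK (T : X → A → X → ℝ) (π : ℕ → A → X → ℝ) (P0 : X → ℝ) (φ : X → Z)
    (t : ℕ) : List (A × Z) → Z → X → ℝ
  | [], z, x => Bel0 T π P0 φ t z x
  | (a, zp) :: h, z, x =>
      (if φ x = z then ∑ xp : X, T x a xp * BelK T π P0 φ t h zp xp else 0) /
        ∑ xt : X, if φ xt = z then
            ∑ xtp : X, if φ xtp = zp then T xt a xtp * BelK T π P0 φ t h zp xtp else 0
          else 0

/-- Expected next-state dynamics `P_t^π(x'|x)`. -/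
def PNext (T : X → A → X → ℝ) (π : ℕ → A → X → ℝ) (t : ℕ) (x' x : X) : ℝ :=
  ∑ a : A, T x' a x * π t a x

/-- Inverse dynamics model `I_t^π(a|x',x)`. -/
def InvModel (T : X → A → X → ℝ) (π : ℕ → A → X → ℝ) (t : ℕ) (a : A) (x' x : X) : ℝ :=
  T x' a x * π t a x / PNext T π t x' x

/-- `P_t^π(x'|z) = Σ_{x̃} P_t^π(x'|x̃) B_{φ,t}^π(x̃|z)`. -/
def PNextZ (T : X → A → X → ℝ) (π : ℕ → A → X → ℝ) (P0 : X → ℝ) (φ : X → Z)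
    (t : ℕ) (x' : X) (z : Z) : ℝ :=
  ∑ x : X, PNext T π t x' x * Bel0 T π P0 φ t z x

/-- Abstract next-state dynamics `P_{φ,t}^π(z'|z) = Σ_{x'∈z'} P_t^π(x'|z)`. -/
def PZNext (T : X → A → X → ℝ) (π : ℕ → A → X → ℝ) (P0 : X → ℝ) (φ : X → Z)
    (t : ℕ) (z' z : Z) : ℝ :=
  ∑ x' : X, if φ x' = z' then PNextZ T π P0 φ t x' z else 0

/-- Abstract-state visitation distribution `P_{φ,t}^π(z') = Σ_{x'∈z'} P_t^π(x')`. -/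
def PZ (T : X → A → X → ℝ) (π : ℕ → A → X → ℝ) (P0 : X → ℝ) (φ : X → Z)
    (t : ℕ) (z' : Z) : ℝ :=
  ∑ x' : X, if φ x' = z' then Pvis T π P0 t x' else 0

/-- Abstract transition model `T_{φ,t}^π(z'|a,z)`. -/
def TZ (T : X → A → X → ℝ) (π : ℕ → A → X → ℝ) (P0 : X → ℝ) (φ : X → Z)
    (t : ℕ) (z' : Z) (a : A) (z : Z) : ℝ :=
  ∑ x' : X, if φ x' = z' then
      ∑ x : X, if φ x = z then T x' a x * Bel0 T π P0 φ t z x else 0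
    else 0

/-- Abstract inverse model `I_{φ,t}^π(a|z',z) = T_{φ,t}^π(z'|a,z) π_{φ,t}(a|z) / P_{φ,t}^π(z'|z)`,
where the common policy value `π_{φ,t}(a|z)` is given via a representative ground state `x ∈ z`
(well-defined when `π ∈ Π_φ`). -/
def InvModelZ (T : X → A → X → ℝ) (π : ℕ → A → X → ℝ) (P0 : X → ℝ) (φ : X → Z)
    (t : ℕ) (a : A) (z' z : Z) (x : X) : ℝ :=
  TZ T π P0 φ t z' a z * π t a x / PZNext T π P0 φ t z' z

/-- `C_{φ,t}^{π(k)}(x_t)` for a (history-conditioned) belief function `b`. -/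
def CK (π : ℕ → A → X → ℝ) (t : ℕ) (a : A) (b : X → ℝ) (x : X) : ℝ :=
  π t a x * b x / ∑ xt : X, π t a xt * b xt

/-- History-conditioned abstract transition model
`T_{φ,t}^{π(k)}(z₁ | a, z, history) = Σ_{x₁∈z₁} Σ_{x∈z} T(x₁|a,x) C_{φ,t}^{π(k)}(x)`,
where `b` is the corresponding history-conditioned belief. -/
def TK (T : X → A → X → ℝ) (φ : X → Z) (π : ℕ → A → X → ℝ)
    (t : ℕ) (a : A) (z : Z) (b : X → ℝ) (z1 : Z) : ℝ :=
  ∑ x1 : X, if φ x1 = z1 then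
      ∑ x : X, if φ x = z then T x1 a x * CK π t a b x else 0
    else 0

/-- History-conditioned abstract reward `R_{φ,t}^{π(k)}(z₁, a, z, history)`. -/
def RK (Rw T : X → A → X → ℝ) (φ : X → Z) (π : ℕ → A → X → ℝ)
    (t : ℕ) (a : A) (z : Z) (b : X → ℝ) (z1 : Z) : ℝ :=
  (∑ x1 : X, if φ x1 = z1 then
      ∑ x : X, if φ x = z then Rw x1 a x * T x1 a x * CK π t a b x else 0
    else 0) / TK T φ π t a z b z1

/-- Backwards dynamics `P_t^π(x, a | x')`. -/
def PBack (T : X → A → X → ℝ) (π : ℕ → A → X → ℝ) (P0 : X → ℝ)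
    (t : ℕ) (x : X) (a : A) (x' : X) : ℝ :=
  T x' a x * π t a x * Pvis T π P0 t x /
    ∑ xt : X, ∑ ap : A, T x' ap xt * π t ap xt * Pvis T π P0 t xt

/-- Positivity of all the denominators appearing in the recursive definition of the
`k`-step belief distribution for a given history. -/
def BelKDenPos (T : X → A → X → ℝ) (π : ℕ → A → X → ℝ) (P0 : X → ℝ) (φ : X → Z)
    (t : ℕ) : List (A × Z) → Z → Prop
  | [], z => 0 < ∑ x : X, if φ x = z then Pvis T π P0 t x else 0
  | (a, zp) :: h, z =>
      (0 < ∑ xt : X, if φ xt = z then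
          ∑ xtp : X, if φ xtp = zp then T xt a xtp * BelK T π P0 φ t h zp xtp else 0
        else 0) ∧
      BelKDenPos T π P0 φ t h zp

/-- Auxiliary: the transition kernel of the example. -/
def Tex : Fin 4 → Fin 2 → Fin 4 → ℝ := fun x' a x =>
  if a = 0 then (if x' = ![0, 3, 0, 3] x then 1 else 0)
  else if x' = 1 ∨ x' = 2 then 1 / 2 else 0

def φex : Fin 4 → Fin 3 := ![0, 1, 1, 2]

def P0ex : Fin 4 → ℝ := fun _ => 1 / 4

lemma belK_support (T : X → A → X → ℝ) (π : ℕ → A → X → ℝ) (P0 : X → ℝ) (φ : X → Z)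
    (t : ℕ) (h : List (A × Z)) (z : Z) (x : X) (hx : φ x ≠ z) :
    BelK T π P0 φ t h z x = 0 := by
  cases h with
  | nil => simp [BelK, Bel0, hx]
  | cons p h => obtain ⟨a, zp⟩ := p; simp [BelK, hx]

lemma Tex_one_two (a : Fin 2) (xp : Fin 4) : Tex 1 a xp = Tex 2 a xp := by
  fin_cases a <;> fin_cases xp <;> simp [Tex]

lemma Tex_zero_one (xp : Fin 4) : Tex 1 0 xp = 0 := by fin_cases xp <;> simp [Tex]
lemma Tex_zero_two (xp : Fin 4) : Tex 2 0 xp = 0 := by fin_cases xp <;> simp [Tex]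
lemma Tex_half_one (xp : Fin 4) : Tex 1 1 xp = 1 / 2 := by simp [Tex]
lemma Tex_half_two (xp : Fin 4) : Tex 2 1 xp = 1 / 2 := by simp [Tex]

lemma pvis_symm (π : ℕ → Fin 2 → Fin 4 → ℝ) (t : ℕ) :
    Pvis Tex π P0ex t 1 = Pvis Tex π P0ex t 2 := by
  cases t with
  | zero => rfl
  | succ t =>
    simp only [Pvis]
    exact Finset.sum_congr rfl fun a _ => Finset.sum_congr rfl fun xp _ => by
      rw [Tex_one_two]

lemma markov_main (π : ℕ → Fin 2 → Fin 4 → ℝ) (t : ℕ) (a : Fin 2) (zp : Fin 3)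
    (h : List (Fin 2 × Fin 3)) (z : Fin 3) (x : Fin 4)
    (hD : 0 < ∑ xt : Fin 4, if φex xt = z then
        ∑ xtp : Fin 4, if φex xtp = zp then Tex xt a xtp * BelK Tex π P0ex φex t h zp xtp else 0
      else 0)
    (hP : 0 < ∑ y : Fin 4, if φex y = z then Pvis Tex π P0ex t y else 0) :
    BelK Tex π P0ex φex t ((a, zp) :: h) z x = Bel0 Tex π P0ex φex t z x := by
  set b : Fin 4 → ℝ := BelK Tex π P0ex φex t h zp with hb
  have hsupp : ∀ xp : Fin 4, φex xp ≠ zp → b xp = 0 := fun xp hxp =>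
    belK_support _ _ _ _ _ _ _ _ hxp
  have hinner : ∀ xt : Fin 4,
      (∑ xtp : Fin 4, if φex xtp = zp then Tex xt a xtp * b xtp else 0)
        = ∑ xtp : Fin 4, Tex xt a xtp * b xtp := by
    intro xt
    refine Finset.sum_congr rfl fun xtp _ => ?_
    by_cases hc : φex xtp = zp
    · simp [hc]
    · simp [hc, hsupp xtp hc]
  set N : Fin 4 → ℝ := fun xt => ∑ xtp : Fin 4, Tex xt a xtp * b xtp with hN
  have half_lemma : ∀ c : ℝ, 0 < c → c / (c + c) = 1 / 2 := by
    intro c hc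
    field_simp
    ring
  simp only [BelK, ← hb, hinner, ← hN] at hD ⊢
  simp only [Bel0]
  fin_cases z <;>
    simp only [Fin.sum_univ_four, φex, Matrix.cons_val_zero, Matrix.cons_val_one,
      Matrix.head_cons, Matrix.cons_val_two, Matrix.tail_cons, Matrix.cons_val_three,
      Matrix.cons_val_fin_one, Fin.reduceEq, Fin.reduceFinMk, if_true, if_false,
      Matrix.cons_val', add_zero, zero_add] at hD hP ⊢
  · -- z = 0, fiber {x0}
    fin_cases x <;>
      simp only [Matrix.cons_val_zero, Matrix.cons_val_one, Matrix.head_cons,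
        Matrix.cons_val_two, Matrix.tail_cons, Matrix.cons_val_three, Fin.reduceEq,
        Fin.reduceFinMk, if_true, if_false, zero_div]
    rw [div_self hD.ne', div_self hP.ne']
  · -- z = 1, fiber {x1, x2}
    fin_cases a
    · exfalso
      simp only [Fin.reduceFinMk, Fin.isValue, Tex_zero_one, Tex_zero_two, zero_mul,
        add_zero, zero_add] at hD
      exact lt_irrefl 0 hD
    · simp only [Fin.reduceFinMk, Fin.isValue, Tex_half_one, Tex_half_two] at hD ⊢
      have hu : 0 < 1 / 2 * b 0 + 1 / 2 * b 1 + 1 / 2 * b 2 + 1 / 2 * b 3 := by linarith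
      have hsym := pvis_symm π t
      rw [← hsym] at hP ⊢
      have hp1 : 0 < Pvis Tex π P0ex t 1 := by linarith
      fin_cases x <;>
        simp only [Matrix.cons_val_zero, Matrix.cons_val_one, Matrix.head_cons,
          Matrix.cons_val_two, Matrix.tail_cons, Matrix.cons_val_three, Fin.reduceEq,
          Fin.reduceFinMk, if_true, if_false, zero_div, Fin.isValue, Tex_half_one,
          Tex_half_two]
      · rw [half_lemma _ hu, half_lemma _ hp1]
      · rw [half_lemma _ hu, ← hsym, half_lemma _ hp1]
  · -- z = 2, fiber {x3}
    fin_cases x <;>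
      simp only [Matrix.cons_val_zero, Matrix.cons_val_one, Matrix.head_cons,
        Matrix.cons_val_two, Matrix.tail_cons, Matrix.cons_val_three, Fin.reduceEq,
        Fin.reduceFinMk, if_true, if_false, zero_div]
    rw [div_self hD.ne', div_self hP.ne']

/-- **Appendix D example.** A Markov abstraction need not be a kinematic inseparability
abstraction: there is a finite MDP (the four-state, two-action example of Figure 4) with
an abstraction `φ` and initial distribution such that `φ` is a Markov abstraction over
the policy class `Π_φ` (whenever the denominators involved are positive), yet forwards
kinematic inseparability fails for two ground states sharing an abstract state. -/
theorem markov_abstraction_not_kinematically_inseparable :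
    ∃ (T Rw : Fin 4 → Fin 2 → Fin 4 → ℝ) (γ : ℝ) (φ : Fin 4 → Fin 3) (P0 : Fin 4 → ℝ),
      0 ≤ γ ∧ γ < 1 ∧
      IsKernel T ∧ IsDist P0 ∧
      -- φ is a Markov abstraction over Π_φ:
      (∀ π : ℕ → Fin 2 → Fin 4 → ℝ, IsPolicy π → InPolicyClass φ π →
        ∀ (t : ℕ) (hist : List (Fin 2 × Fin 3)), hist ≠ [] →
          ∀ (z : Fin 3) (x : Fin 4),
            BelKDenPos T π P0 φ t hist z →
            (0 < ∑ y : Fin 4, if φ y = z then Pvis T π P0 t y else 0) →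
            BelK T π P0 φ t hist z x = Bel0 T π P0 φ t z x) ∧
      -- yet φ is not a kinematic inseparability abstraction (forwards KI fails):
      (∃ (x1 x2 : Fin 4) (a : Fin 2) (x' : Fin 4),
        φ x1 = φ x2 ∧ T x' a x1 ≠ T x' a x2) := by
  refine ⟨Tex, fun _ _ _ => 0, 0, φex, P0ex, le_refl 0, by norm_num, ⟨?_, ?_⟩, ⟨?_, ?_⟩, ?_, ?_⟩
  · intro x' a x
    simp only [Tex]
    split <;> split <;> norm_num
  · intro a x
    fin_cases a <;> fin_cases x <;> simp [Tex, Fin.sum_univ_four] <;> norm_num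
  · intro x; norm_num [P0ex]
  · norm_num [P0ex, Fin.sum_univ_four]
  · intro π hπ hπc t hist hne z x hden hP
    obtain ⟨⟨a, zp⟩, h, rfl⟩ : ∃ p h, hist = p :: h := by
      cases hist with
      | nil => exact absurd rfl hne
      | cons p h => exact ⟨p, h, rfl⟩
    simp only [BelKDenPos] at hden
    exact markov_main π t a zp h z x hden.1 hP
  · refine ⟨1, 2, 0, 3, by decide, ?_⟩
    simp [Tex]

end

end MarkovAbstraction
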